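/- (Chernoff bound vs. Hilbert distance.) Let ρ₁, ρ₂ be density matrices in M_d(ℂ). Then the Chernoff bound ξ := −ln( inf_{0 ≤ s ≤ 1} tr(ρ₁^s ρ₂^{1−s}) ) satisfies ξ ≤ h_{S₊}(ρ₁,ρ₂)/2 (the inequality being trivial when h_{S₊}(ρ₁,ρ₂) = ∞). -/

import Mathlib

open scoped ComplexOrder
open Matrix

noncomputable section

variable {n : Type*} [Fintype n] [DecidableEq n]

/-- `sup(A/B) := inf {λ : ℝ | A ≤ λ B}` w.r.t. the Loewner order (`⊤` if no such `λ` exists). -/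
def msupRatio (A B : Matrix n n ℂ) : EReal :=
  sInf ((fun l : ℝ => (l : EReal)) '' {l : ℝ | (l • B - A).PosSemidef})

/-- `inf(A/B) := sup {λ : ℝ | λ B ≤ A}` w.r.t. the Loewner order. -/
def minfRatio (A B : Matrix n n ℂ) : EReal :=
  sSup ((fun l : ℝ => (l : EReal)) '' {l : ℝ | (A - l • B).PosSemidef})

/-- Hilbert's projective metric `h_{S₊}(A,B) = ln (sup(A/B) · sup(B/A)) ∈ [0,∞]`
w.r.t. the positive semidefinite cone. -/
def mHilbert (A B : Matrix n n ℂ) : EReal :=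
  if msupRatio A B = ⊤ ∨ msupRatio B A = ⊤ then ⊤
  else ((Real.log ((msupRatio A B).toReal * (msupRatio B A).toReal) : ℝ) : EReal)

/-- `tanh(x/4)`, with the convention `tanh(⊤/4) = 1`. -/
def tanhQuarter (x : EReal) : ℝ :=
  if x = ⊤ then 1 else Real.tanh (x.toReal / 4)
open Classical in
/-- The matrix power `A^s` of a Hermitian matrix: apply `x ↦ x^s` to the nonzero eigenvalues,
with the convention that the eigenvalue `0` is sent to `0` (so `A^0` is the projection onto the
support of `A`); junk value `0` if `A` is not Hermitian. -/
def matPow (A : Matrix n n ℂ) (s : ℝ) : Matrix n n ℂ :=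
  if h : A.IsHermitian then
    (h.eigenvectorUnitary : Matrix n n ℂ) *
      diagonal (fun i => ((if h.eigenvalues i = 0 then 0 else (h.eigenvalues i) ^ s : ℝ) : ℂ)) *
      star (h.eigenvectorUnitary : Matrix n n ℂ)
  else 0

set_option linter.unusedVariables false
set_option linter.unusedSectionVars false

def gp (x s : ℝ) : ℝ := if x = 0 then 0 else x ^ s

lemma matPow_eq {A : Matrix n n ℂ} (hA : A.IsHermitian) (s : ℝ) :
    matPow A s = (hA.eigenvectorUnitary : Matrix n n ℂ) *
      diagonal (fun i => ((gp (hA.eigenvalues i) s : ℝ) : ℂ)) *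
      star (hA.eigenvectorUnitary : Matrix n n ℂ) := by
  rw [matPow, dif_pos hA]; rfl

lemma gp_nonneg {x : ℝ} (hx : 0 ≤ x) (s : ℝ) : 0 ≤ gp x s := by
  unfold gp; split
  · exact le_refl 0
  · exact Real.rpow_nonneg hx s

lemma gp_mul {x : ℝ} (hx : 0 ≤ x) (s t : ℝ) : gp x s * gp x t = gp x (s + t) := by
  unfold gp; split_ifs with h
  · simp
  · exact (Real.rpow_add (lt_of_le_of_ne hx (Ne.symm h)) s t).symm

lemma gp_one {x : ℝ} : gp x 1 = x := by
  unfold gp; split_ifs with h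
  · exact h.symm
  · exact Real.rpow_one x

lemma gp_half {x : ℝ} (hx : 0 ≤ x) : gp x (1/2) = Real.sqrt x := by
  unfold gp; split_ifs with h
  · simp [h]
  · exact (Real.sqrt_eq_rpow x).symm

lemma gp_young {x y t : ℝ} (hx : 0 ≤ x) (hy : 0 ≤ y) (ht0 : 0 ≤ t) (ht1 : t ≤ 1) :
    gp x t * gp y (1 - t) ≤ t * x + (1 - t) * y := by
  have h1t : (0:ℝ) ≤ 1 - t := by linarith
  have hrhs : 0 ≤ t * x + (1 - t) * y := add_nonneg (mul_nonneg ht0 hx) (mul_nonneg h1t hy)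
  unfold gp; split_ifs with h1 h2 h2
  · simpa using hrhs
  · simpa using hrhs
  · simpa using hrhs
  · exact Real.geom_mean_le_arith_mean2_weighted ht0 h1t hx hy (by ring)
open scoped MatrixOrder in
lemma psd_eq_of_sq_eq_sq {A B : Matrix n n ℂ} (hA : A.PosSemidef) (hB : B.PosSemidef)
    (h : A ^ 2 = B ^ 2) : A = B := by
  have h1 := CFC.sqrt_unique (a := A ^ 2) (b := A) (sq A).symm hA.nonneg
  have h2 := CFC.sqrt_unique (a := A ^ 2) (b := B) (by rw [h, sq]) hB.nonneg
  exact h1.symm.trans h2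
open scoped MatrixOrder in
lemma psd_exists_conjTranspose_mul {B : Matrix n n ℂ} (hB : B.PosSemidef) :
    ∃ C : Matrix n n ℂ, B = Cᴴ * C :=
  CStarAlgebra.nonneg_iff_eq_star_mul_self.mp hB.nonneg
lemma psd_smul {A : Matrix n n ℂ} (hA : A.PosSemidef) {c : ℝ} (hc : 0 ≤ c) :
    (c • A).PosSemidef := by
  refine PosSemidef.of_dotProduct_mulVec_nonneg ?_ ?_
  · show (c • A)ᴴ = c • A
    rw [conjTranspose_smul, star_trivial, hA.1]
  · intro x
    rw [smul_mulVec, dotProduct_smul]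
    rw [Complex.real_smul]
    exact mul_nonneg (by exact_mod_cast hc) (hA.dotProduct_mulVec_nonneg x)

lemma trace_psd_nonneg {A : Matrix n n ℂ} (hA : A.PosSemidef) : 0 ≤ A.trace := by
  refine Finset.sum_nonneg fun i _ => ?_
  have h := hA.dotProduct_mulVec_nonneg (Pi.single i 1)
  have e : star (Pi.single i 1 : n → ℂ) ⬝ᵥ (A *ᵥ Pi.single i 1) = A.diag i := by
    simp [dotProduct, Matrix.mulVec_single, Pi.single_apply, apply_ite, Finset.sum_ite_eq,
      Matrix.diag]
  rwa [e] at h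

lemma trace_mul_psd_nonneg {A B : Matrix n n ℂ} (hA : A.PosSemidef) (hB : B.PosSemidef) :
    0 ≤ (A * B).trace := by
  obtain ⟨C, rfl⟩ := psd_exists_conjTranspose_mul hB
  have : A * (Cᴴ * C) = (A * Cᴴ) * C := by rw [mul_assoc]
  rw [this, trace_mul_comm, ← mul_assoc]
  exact trace_psd_nonneg (hA.mul_mul_conjTranspose_same C)
lemma matPow_posSemidef {A : Matrix n n ℂ} (hA : A.PosSemidef) (s : ℝ) :
    (matPow A s).PosSemidef := by
  rw [matPow_eq hA.1 s]
  have hd : (Matrix.diagonal (fun i => ((gp (hA.1.eigenvalues i) s : ℝ) : ℂ))).PosSemidef :=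
    posSemidef_diagonal_iff.mpr fun i => by
      rw [Complex.zero_le_real]; exact gp_nonneg (hA.eigenvalues_nonneg i) s
  have := hd.mul_mul_conjTranspose_same (hA.1.eigenvectorUnitary : Matrix n n ℂ)
  rwa [Matrix.star_eq_conjTranspose]

lemma unitary_star_mul {A : Matrix n n ℂ} (hA : A.IsHermitian) :
    star (hA.eigenvectorUnitary : Matrix n n ℂ) * (hA.eigenvectorUnitary : Matrix n n ℂ) = 1 :=
  Matrix.mem_unitaryGroup_iff'.mp hA.eigenvectorUnitary.2

lemma matPow_mul {A : Matrix n n ℂ} (hA : A.PosSemidef) (s t : ℝ) :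
    matPow A s * matPow A t = matPow A (s + t) := by
  rw [matPow_eq hA.1 s, matPow_eq hA.1 t, matPow_eq hA.1 (s + t)]
  set U := (hA.1.eigenvectorUnitary : Matrix n n ℂ)
  have h1 : ∀ X : Matrix n n ℂ, star U * (U * X) = X := fun X => by
    rw [← mul_assoc, unitary_star_mul hA.1, one_mul]
  simp only [mul_assoc]
  rw [h1]
  congr 1
  rw [← mul_assoc (diagonal _), diagonal_mul_diagonal]
  have he : (fun i => ((gp (hA.1.eigenvalues i) s : ℝ) : ℂ) * ((gp (hA.1.eigenvalues i) t : ℝ) : ℂ))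
      = (fun i => ((gp (hA.1.eigenvalues i) (s + t) : ℝ) : ℂ)) :=
    funext fun i => by rw [← Complex.ofReal_mul, gp_mul (hA.eigenvalues_nonneg i)]
  rw [he]

lemma matPow_one {A : Matrix n n ℂ} (hA : A.IsHermitian) : matPow A 1 = A := by
  rw [matPow_eq hA 1]
  have : (fun i => ((gp (hA.eigenvalues i) 1 : ℝ) : ℂ)) = RCLike.ofReal ∘ hA.eigenvalues := by
    funext i; rw [gp_one]; rfl
  rw [this, ← Unitary.conjStarAlgAut_apply (S := ℂ), ← hA.spectral_theorem]
lemma matPow_half_mul {A : Matrix n n ℂ} (hA : A.PosSemidef) :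
    matPow A (1/2) * matPow A (1/2) = A := by
  rw [matPow_mul hA]; norm_num; exact matPow_one hA.1

lemma smul_matPow_half {A : Matrix n n ℂ} (hA : A.PosSemidef) {c : ℝ} (hc : 0 ≤ c) :
    matPow (c • A) (1/2) = (Real.sqrt c) • matPow A (1/2) := by
  have h1 : (c • A).PosSemidef := psd_smul hA hc
  refine psd_eq_of_sq_eq_sq (matPow_posSemidef h1 (1/2))
    (psd_smul (matPow_posSemidef hA (1/2)) (Real.sqrt_nonneg c)) ?_
  rw [pow_two, pow_two, matPow_half_mul h1, smul_mul_assoc, mul_smul_comm, smul_smul,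
    Real.mul_self_sqrt hc, matPow_half_mul hA]

lemma herm_dot {M : Matrix n n ℂ} (hM : M.IsHermitian) (v w : n → ℂ) :
    star v ⬝ᵥ (M *ᵥ w) = star (M *ᵥ v) ⬝ᵥ w := by
  rw [Matrix.star_mulVec, hM.eq, Matrix.dotProduct_mulVec]

set_option maxHeartbeats 1000000 in
lemma sqrt_mono {X Y : Matrix n n ℂ} (hX : X.PosSemidef) (hY : Y.PosSemidef)
    (hXY : (Y - X).PosSemidef) : (matPow Y (1/2) - matPow X (1/2)).PosSemidef := by
  set P := matPow X (1/2) with hPdef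
  set Q := matPow Y (1/2) with hQdef
  have hP : P.PosSemidef := matPow_posSemidef hX _
  have hQ : Q.PosSemidef := matPow_posSemidef hY _
  have hM : (Q - P).IsHermitian := hQ.1.sub hP.1
  apply hM.posSemidef_iff_eigenvalues_nonneg.mpr
  intro k
  by_contra hneg
  push_neg at hneg
  rw [Pi.zero_apply] at hneg
  set α := hM.eigenvalues k with hα
  set v : n → ℂ := ⇑(hM.eigenvectorBasis k) with hv
  have hvec : (Q - P) *ᵥ v = α • v := hM.mulVec_eigenvectorBasis k
  have hv0 : v ≠ 0 := by
    intro h0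
    have := hM.eigenvectorBasis.orthonormal.1 k
    rw [hv] at h0
    rw [show (hM.eigenvectorBasis k : EuclideanSpace ℂ n) = 0 from by ext i; exact congrFun h0 i] at this
    simp at this
  have hid : Y - X = Q * (Q - P) + (Q - P) * P := by
    have hQQ : Q * Q = Y := matPow_half_mul hY
    have hPP : P * P = X := matPow_half_mul hX
    rw [mul_sub, sub_mul, hQQ, hPP]; abel
  have h1 : 0 ≤ star v ⬝ᵥ ((Y - X) *ᵥ v) := hXY.dotProduct_mulVec_nonneg v
  rw [hid] at h1
  set zQ := star v ⬝ᵥ (Q *ᵥ v) with hzQ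
  set zP := star v ⬝ᵥ (P *ᵥ v) with hzP
  have hexp : star v ⬝ᵥ ((Q * (Q - P) + (Q - P) * P) *ᵥ v) = α • zQ + α • zP := by
    rw [Matrix.add_mulVec, dotProduct_add]
    congr 1
    · rw [← Matrix.mulVec_mulVec, hvec, Matrix.mulVec_smul, dotProduct_smul]
    · rw [← Matrix.mulVec_mulVec, herm_dot hM, hvec, star_smul, star_trivial,
        smul_dotProduct]
  rw [hexp, ← smul_add] at h1
  have hzQ0 : 0 ≤ zQ := hQ.dotProduct_mulVec_nonneg v
  have hzP0 : 0 ≤ zP := hP.dotProduct_mulVec_nonneg v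
  have hsum0 : zQ + zP = 0 := by
    have hre : (zQ + zP).re ≤ 0 := by
      have h1re := (Complex.le_def.mp h1).1
      rw [Complex.real_smul, Complex.mul_re, Complex.ofReal_re, Complex.ofReal_im] at h1re
      simp only [Complex.zero_re, zero_mul, sub_zero] at h1re
      nlinarith [h1re]
    have hre' : 0 ≤ (zQ + zP).re := by
      have := add_nonneg hzQ0 hzP0
      exact (Complex.le_def.mp this).1
    have him : (zQ + zP).im = 0 := ((Complex.le_def.mp (add_nonneg hzQ0 hzP0)).2).symm
    exact Complex.ext (le_antisymm hre hre') him
  have hzQz : zQ = 0 := by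
    have : zQ ≤ 0 := by
      have : zQ = -zP := by linear_combination hsum0
      rw [this]; exact neg_nonpos.mpr hzP0
    exact le_antisymm this hzQ0
  have hzPz : zP = 0 := by
    have : zP = -zQ := by linear_combination hsum0
    rw [this, hzQz, neg_zero]
  have hQv : Q *ᵥ v = 0 := (hQ.dotProduct_mulVec_zero_iff v).mp hzQz
  have hPv : P *ᵥ v = 0 := (hP.dotProduct_mulVec_zero_iff v).mp hzPz
  have : α • v = 0 := by
    rw [← hvec, Matrix.sub_mulVec, hQv, hPv, sub_zero]
  rcases smul_eq_zero.mp this with h | h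
  · exact absurd h (by exact ne_of_lt hneg)
  · exact hv0 h
/-- the overlap matrix entries -/
def qov {A B : Matrix n n ℂ} (hA : A.IsHermitian) (hB : B.IsHermitian) (i j : n) : ℝ :=
  Complex.normSq ((star (hA.eigenvectorUnitary : Matrix n n ℂ) *
    (hB.eigenvectorUnitary : Matrix n n ℂ)) i j)

lemma qov_nonneg {A B : Matrix n n ℂ} (hA : A.IsHermitian) (hB : B.IsHermitian) (i j : n) :
    0 ≤ qov hA hB i j := Complex.normSq_nonneg _

lemma qov_row_sum {A B : Matrix n n ℂ} (hA : A.IsHermitian) (hB : B.IsHermitian) (i : n) :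
    ∑ j, qov hA hB i j = 1 := by
  set U := (hA.eigenvectorUnitary : Matrix n n ℂ) with hU
  set V := (hB.eigenvectorUnitary : Matrix n n ℂ) with hV
  set W := star U * V with hW
  have hWW : W * star W = 1 := by
    rw [hW, Matrix.star_mul, star_star]
    calc star U * V * (star V * U) = star U * (V * star V) * U := by
          simp only [Matrix.mul_assoc]
      _ = 1 := by
          rw [Matrix.mem_unitaryGroup_iff.mp hB.eigenvectorUnitary.2, Matrix.mul_one,
            Matrix.mem_unitaryGroup_iff'.mp hA.eigenvectorUnitary.2]
  have h1 : (W * star W) i i = 1 := by rw [hWW]; simp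
  rw [Matrix.mul_apply] at h1
  have : ∀ j, W i j * star W j i = ((qov hA hB i j : ℝ) : ℂ) := fun j => by
    rw [Matrix.star_apply, Complex.star_def, Complex.mul_conj]; rfl
  rw [Finset.sum_congr rfl (fun j _ => this j)] at h1
  exact_mod_cast h1

lemma qov_col_sum {A B : Matrix n n ℂ} (hA : A.IsHermitian) (hB : B.IsHermitian) (j : n) :
    ∑ i, qov hA hB i j = 1 := by
  set U := (hA.eigenvectorUnitary : Matrix n n ℂ) with hU
  set V := (hB.eigenvectorUnitary : Matrix n n ℂ) with hV
  set W := star U * V with hW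
  have hWW : star W * W = 1 := by
    rw [hW, Matrix.star_mul, star_star]
    calc star V * U * (star U * V) = star V * (U * star U) * V := by
          simp only [Matrix.mul_assoc]
      _ = 1 := by
          rw [Matrix.mem_unitaryGroup_iff.mp hA.eigenvectorUnitary.2, Matrix.mul_one,
            Matrix.mem_unitaryGroup_iff'.mp hB.eigenvectorUnitary.2]
  have h1 : (star W * W) j j = 1 := by rw [hWW]; simp
  rw [Matrix.mul_apply] at h1
  have : ∀ i, star W j i * W i j = ((qov hA hB i j : ℝ) : ℂ) := fun i => by
    rw [Matrix.star_apply, Complex.star_def, mul_comm, Complex.mul_conj]; rfl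
  rw [Finset.sum_congr rfl (fun i _ => this i)] at h1
  exact_mod_cast h1

lemma trace_rep {A B : Matrix n n ℂ} (hA : A.IsHermitian) (hB : B.IsHermitian) (s t : ℝ) :
    (matPow A s * matPow B t).trace =
      ((∑ i, ∑ j, gp (hA.eigenvalues i) s * gp (hB.eigenvalues j) t * qov hA hB i j : ℝ) : ℂ) := by
  rw [matPow_eq hA s, matPow_eq hB t]
  set U := (hA.eigenvectorUnitary : Matrix n n ℂ) with hU
  set V := (hB.eigenvectorUnitary : Matrix n n ℂ) with hV
  set Da := diagonal (fun i => ((gp (hA.eigenvalues i) s : ℝ) : ℂ)) with hDa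
  set Db := diagonal (fun j => ((gp (hB.eigenvalues j) t : ℝ) : ℂ)) with hDb
  set W := star U * V with hW
  have e1 : U * Da * star U * (V * Db * star V) = U * (Da * (star U * (V * (Db * star V)))) := by
    simp only [Matrix.mul_assoc]
  rw [e1, Matrix.trace_mul_comm]
  have e2 : Da * (star U * (V * (Db * star V))) * U = Da * (W * (Db * star W)) := by
    rw [hW, Matrix.star_mul, star_star]
    simp only [Matrix.mul_assoc]
  rw [e2, Matrix.trace]
  push_cast
  refine Finset.sum_congr rfl fun i _ => ?_
  rw [Matrix.diag_apply, Matrix.diagonal_mul, Matrix.mul_apply, Finset.mul_sum]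
  refine Finset.sum_congr rfl fun j _ => ?_
  rw [Matrix.diagonal_mul, Matrix.star_apply]
  simp only [qov]
  rw [Complex.star_def]
  rw [show ((Complex.normSq ((star U * V) i j) : ℝ) : ℂ) = W i j * (starRingEnd ℂ) (W i j) from by
    rw [Complex.mul_conj, hW]]
  ring
lemma msup_spec {A B : Matrix n n ℂ} (hA : A.PosSemidef) (hB : B.PosSemidef)
    (tA : A.trace = 1) (tB : B.trace = 1) (h : msupRatio A B ≠ ⊤) :
    ∃ l : ℝ, 1 ≤ l ∧ (l • B - A).PosSemidef ∧ msupRatio A B = (l : EReal) := by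
  set S := {l : ℝ | (l • B - A).PosSemidef} with hS
  have hne : S.Nonempty := by
    by_contra h'
    apply h
    unfold msupRatio
    rw [← hS, Set.not_nonempty_iff_eq_empty.mp h', Set.image_empty, sInf_empty]
  have hlb : ∀ x ∈ S, 1 ≤ x := by
    intro x hx
    have h0 := trace_psd_nonneg hx
    rw [trace_sub, trace_smul, tA, tB, Complex.real_smul, mul_one] at h0
    have : ((0:ℝ) : ℂ) ≤ ((x - 1 : ℝ) : ℂ) := by push_cast; simpa using h0
    have := Complex.real_le_real.mp this
    linarith
  have hbdd : BddBelow S := ⟨1, hlb⟩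
  set l0 := sInf S with hl0
  have hl01 : 1 ≤ l0 := le_csInf hne hlb
  have hup : ∀ {x y : ℝ}, x ∈ S → x ≤ y → y ∈ S := by
    intro x y hx hxy
    have e : y • B - A = (x • B - A) + (y - x) • B := by
      rw [sub_smul]; abel
    rw [hS, Set.mem_setOf_eq, e]
    exact hx.add (psd_smul hB (by linarith))
  have hmem : (l0 • B - A).PosSemidef := by
    have hherm : (l0 • B - A).IsHermitian := ((psd_smul hB (by linarith : (0:ℝ) ≤ l0)).1).sub hA.1
    refine PosSemidef.of_dotProduct_mulVec_nonneg hherm fun x => ?_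
    set z := star x ⬝ᵥ ((l0 • B - A) *ᵥ x) with hz
    set w := star x ⬝ᵥ (B *ᵥ x) with hw
    have hw0 : 0 ≤ w := hB.dotProduct_mulVec_nonneg x
    have hwre : 0 ≤ w.re := (Complex.le_def.mp hw0).1
    have key : ∀ ε : ℝ, 0 < ε → 0 ≤ z + (ε : ℂ) * w := by
      intro ε hε
      obtain ⟨y, hy, hy'⟩ := Real.lt_sInf_add_pos hne hε
      have hmemε : (l0 + ε) ∈ S := hup hy (le_of_lt hy')
      have h0 := hmemε.dotProduct_mulVec_nonneg x
      have e : (l0 + ε) • B - A = (l0 • B - A) + ε • B := by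
        rw [add_smul]; abel
      rw [e, Matrix.add_mulVec, dotProduct_add, Matrix.smul_mulVec,
        dotProduct_smul, Complex.real_smul] at h0
      exact h0
    -- z is real
    have hzsym : (starRingEnd ℂ) z = z := by
      rw [hz]
      have : star (star x ⬝ᵥ ((l0 • B - A) *ᵥ x)) = star ((l0 • B - A) *ᵥ x) ⬝ᵥ x := by
        rw [star_dotProduct]
        exact star_star _
      rw [Complex.star_def] at this
      rw [this, Matrix.star_mulVec, hherm.eq, ← Matrix.dotProduct_mulVec]
    have hzim : z.im = 0 := (Complex.conj_eq_iff_im.mp hzsym)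
    rw [Complex.le_def]
    constructor
    · by_contra hc
      push_neg at hc
      simp only [Complex.zero_re] at hc
      have hε : 0 < -z.re / (w.re + 1) := by
        apply div_pos (by linarith) (by linarith)
      have h1 := (Complex.le_def.mp (key _ hε)).1
      rw [Complex.add_re, Complex.mul_re, Complex.ofReal_re, Complex.ofReal_im] at h1
      simp only [zero_mul, sub_zero, Complex.zero_re] at h1
      have hle : -z.re / (w.re + 1) * w.re < -z.re := by
        rw [div_mul_eq_mul_div, div_lt_iff₀ (by linarith)]
        nlinarith
      linarith
    · simp [hzim]
  refine ⟨l0, hl01, hmem, ?_⟩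
  apply le_antisymm
  · exact sInf_le ⟨l0, hmem, rfl⟩
  · refine le_sInf fun y hy => ?_
    obtain ⟨x, hx, rfl⟩ := hy
    exact EReal.coe_le_coe_iff.mpr (csInf_le hbdd hx)
def Fq {A B : Matrix n n ℂ} (hA : A.IsHermitian) (hB : B.IsHermitian) (s t : ℝ) : ℝ :=
  ∑ i, ∑ j, gp (hA.eigenvalues i) s * gp (hB.eigenvalues j) t * qov hA hB i j

lemma eig_sum_one {A : Matrix n n ℂ} (hA : A.IsHermitian) (tA : A.trace = 1) :
    ∑ i, hA.eigenvalues i = 1 := by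
  have h : A.trace = ∑ i, (hA.eigenvalues i : ℂ) := by
    conv_lhs => rw [hA.spectral_theorem]
    rw [Unitary.conjStarAlgAut_apply, Matrix.trace_mul_cycle, unitary_star_mul hA, Matrix.one_mul, trace_diagonal]
    rfl
  rw [tA] at h
  exact_mod_cast h.symm

lemma Fq_nonneg {A B : Matrix n n ℂ} (hA : A.PosSemidef) (hB : B.PosSemidef) (s t : ℝ) :
    0 ≤ Fq hA.1 hB.1 s t := by
  refine Finset.sum_nonneg fun i _ => Finset.sum_nonneg fun j _ => ?_
  exact mul_nonneg (mul_nonneg (gp_nonneg (hA.eigenvalues_nonneg i) s)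
    (gp_nonneg (hB.eigenvalues_nonneg j) t)) (qov_nonneg _ _ i j)

lemma Fq_le_one {A B : Matrix n n ℂ} (hA : A.PosSemidef) (hB : B.PosSemidef)
    (tA : A.trace = 1) (tB : B.trace = 1) {t : ℝ} (ht0 : 0 ≤ t) (ht1 : t ≤ 1) :
    Fq hA.1 hB.1 t (1 - t) ≤ 1 := by
  have step1 : Fq hA.1 hB.1 t (1 - t) ≤
      ∑ i, ∑ j, (t * (hA.1.eigenvalues i * qov hA.1 hB.1 i j)
        + (1 - t) * (hB.1.eigenvalues j * qov hA.1 hB.1 i j)) := by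
    refine Finset.sum_le_sum fun i _ => Finset.sum_le_sum fun j _ => ?_
    have hY := gp_young (hA.eigenvalues_nonneg i) (hB.eigenvalues_nonneg j) ht0 ht1
    calc gp (hA.1.eigenvalues i) t * gp (hB.1.eigenvalues j) (1 - t) * qov hA.1 hB.1 i j
        ≤ (t * hA.1.eigenvalues i + (1 - t) * hB.1.eigenvalues j) * qov hA.1 hB.1 i j :=
          mul_le_mul_of_nonneg_right hY (qov_nonneg _ _ i j)
      _ = t * (hA.1.eigenvalues i * qov hA.1 hB.1 i j)
          + (1 - t) * (hB.1.eigenvalues j * qov hA.1 hB.1 i j) := by ring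
  have e1 : (∑ i, ∑ j, (t * (hA.1.eigenvalues i * qov hA.1 hB.1 i j)
        + (1 - t) * (hB.1.eigenvalues j * qov hA.1 hB.1 i j)))
      = t * ∑ i, (hA.1.eigenvalues i * ∑ j, qov hA.1 hB.1 i j)
        + (1 - t) * ∑ j, (hB.1.eigenvalues j * ∑ i, qov hA.1 hB.1 i j) := by
    simp only [Finset.sum_add_distrib, Finset.mul_sum]
    congr 1
    rw [Finset.sum_comm]
  have e2 : (∑ i, (hA.1.eigenvalues i * ∑ j, qov hA.1 hB.1 i j)) = 1 := by
    simp only [qov_row_sum, mul_one]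
    exact eig_sum_one hA.1 tA
  have e3 : (∑ j, (hB.1.eigenvalues j * ∑ i, qov hA.1 hB.1 i j)) = 1 := by
    simp only [qov_col_sum, mul_one]
    exact eig_sum_one hB.1 tB
  calc Fq hA.1 hB.1 t (1 - t) ≤ _ := step1
    _ = _ := e1
    _ = 1 := by rw [e2, e3]; ring

lemma Fq_CS {A B : Matrix n n ℂ} (hA : A.PosSemidef) (hB : B.PosSemidef) (s : ℝ) :
    Fq hA.1 hB.1 (1/2) (1/2) * Fq hA.1 hB.1 (1/2) (1/2)
      ≤ Fq hA.1 hB.1 s (1 - s) * Fq hA.1 hB.1 (1 - s) s := by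
  have ha := fun i => hA.eigenvalues_nonneg i
  have hb := fun j => hB.eigenvalues_nonneg j
  have hq := fun i j => qov_nonneg hA.1 hB.1 i j
  set φ : n × n → ℝ := fun p =>
    Real.sqrt (gp (hA.1.eigenvalues p.1) s * gp (hB.1.eigenvalues p.2) (1 - s)
      * qov hA.1 hB.1 p.1 p.2) with hφ
  set ψ : n × n → ℝ := fun p =>
    Real.sqrt (gp (hA.1.eigenvalues p.1) (1 - s) * gp (hB.1.eigenvalues p.2) s
      * qov hA.1 hB.1 p.1 p.2) with hψ
  have hCS := Finset.sum_mul_sq_le_sq_mul_sq Finset.univ φ ψ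
  have eφ : ∑ p : n × n, φ p ^ 2 = Fq hA.1 hB.1 s (1 - s) := by
    rw [Fq, Fintype.sum_prod_type]
    refine Finset.sum_congr rfl fun i _ => Finset.sum_congr rfl fun j _ => ?_
    exact Real.sq_sqrt (mul_nonneg (mul_nonneg (gp_nonneg (ha i) _)
      (gp_nonneg (hb j) _)) (hq i j))
  have eψ : ∑ p : n × n, ψ p ^ 2 = Fq hA.1 hB.1 (1 - s) s := by
    rw [Fq, Fintype.sum_prod_type]
    refine Finset.sum_congr rfl fun i _ => Finset.sum_congr rfl fun j _ => ?_
    exact Real.sq_sqrt (mul_nonneg (mul_nonneg (gp_nonneg (ha i) _)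
      (gp_nonneg (hb j) _)) (hq i j))
  have eφψ : ∑ p : n × n, φ p * ψ p = Fq hA.1 hB.1 (1/2) (1/2) := by
    rw [Fq, Fintype.sum_prod_type]
    refine Finset.sum_congr rfl fun i _ => Finset.sum_congr rfl fun j _ => ?_
    show Real.sqrt (gp (hA.1.eigenvalues i) s * gp (hB.1.eigenvalues j) (1 - s)
        * qov hA.1 hB.1 i j)
      * Real.sqrt (gp (hA.1.eigenvalues i) (1 - s) * gp (hB.1.eigenvalues j) s
        * qov hA.1 hB.1 i j) = _
    rw [← Real.sqrt_mul (mul_nonneg (mul_nonneg (gp_nonneg (ha i) _)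
      (gp_nonneg (hb j) _)) (hq i j))]
    have e1 : gp (hA.1.eigenvalues i) s * gp (hA.1.eigenvalues i) (1 - s)
        = hA.1.eigenvalues i := by
      rw [gp_mul (ha i), show s + (1 - s) = 1 from by ring, gp_one]
    have e2 : gp (hB.1.eigenvalues j) (1 - s) * gp (hB.1.eigenvalues j) s
        = hB.1.eigenvalues j := by
      rw [gp_mul (hb j), show 1 - s + s = 1 from by ring, gp_one]
    have e : gp (hA.1.eigenvalues i) s * gp (hB.1.eigenvalues j) (1 - s)
        * qov hA.1 hB.1 i j * (gp (hA.1.eigenvalues i) (1 - s)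
        * gp (hB.1.eigenvalues j) s * qov hA.1 hB.1 i j)
        = (hA.1.eigenvalues i * hB.1.eigenvalues j)
          * (qov hA.1 hB.1 i j * qov hA.1 hB.1 i j) := by
      calc gp (hA.1.eigenvalues i) s * gp (hB.1.eigenvalues j) (1 - s)
          * qov hA.1 hB.1 i j * (gp (hA.1.eigenvalues i) (1 - s)
          * gp (hB.1.eigenvalues j) s * qov hA.1 hB.1 i j)
          = (gp (hA.1.eigenvalues i) s * gp (hA.1.eigenvalues i) (1 - s))
            * (gp (hB.1.eigenvalues j) (1 - s) * gp (hB.1.eigenvalues j) s)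
            * (qov hA.1 hB.1 i j * qov hA.1 hB.1 i j) := by ring
        _ = _ := by rw [e1, e2]
    rw [e, Real.sqrt_mul (mul_nonneg (ha i) (hb j)),
      Real.sqrt_mul_self (hq i j), Real.sqrt_mul (ha i),
      gp_half (ha i), gp_half (hb j)]
  rw [eφ, eψ, eφψ] at hCS
  calc Fq hA.1 hB.1 (1/2) (1/2) * Fq hA.1 hB.1 (1/2) (1/2)
      = Fq hA.1 hB.1 (1/2) (1/2) ^ 2 := by ring
    _ ≤ _ := hCS
lemma Fq_half_ge {A B : Matrix n n ℂ} (hA : A.PosSemidef) (hB : B.PosSemidef)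
    (tB : B.trace = 1) {m : ℝ} (hm0 : 0 ≤ m) (hm : (m • A - B).PosSemidef) :
    1 ≤ Real.sqrt m * Fq hA.1 hB.1 (1/2) (1/2) := by
  set P := matPow A (1/2) with hP
  set Q := matPow B (1/2) with hQ
  have h2' : ((Real.sqrt m) • P - Q).PosSemidef := by
    have h := sqrt_mono hB (psd_smul hA hm0) hm
    rwa [smul_matPow_half hA hm0] at h
  have h3 : 0 ≤ (Q * ((Real.sqrt m) • P - Q)).trace :=
    trace_mul_psd_nonneg (matPow_posSemidef hB _) h2'
  have e : Q * ((Real.sqrt m) • P - Q) = (Real.sqrt m) • (Q * P) - B := by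
    rw [mul_sub, mul_smul_comm, hQ, matPow_half_mul hB]
  rw [e, trace_sub, trace_smul, tB] at h3
  have etr : (Q * P).trace = ((Fq hA.1 hB.1 (1/2) (1/2) : ℝ) : ℂ) := by
    rw [trace_mul_comm, trace_rep hA.1 hB.1, Fq]
  rw [etr, Complex.real_smul, ← Complex.ofReal_mul] at h3
  have h4 : ((0 : ℝ) : ℂ) ≤ ((Real.sqrt m * Fq hA.1 hB.1 (1/2) (1/2) - 1 : ℝ) : ℂ) := by
    push_cast
    simpa using h3
  have := Complex.real_le_real.mp h4
  linarith

lemma Fq_half_ge' {A B : Matrix n n ℂ} (hA : A.PosSemidef) (hB : B.PosSemidef)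
    (tA : A.trace = 1) {l : ℝ} (hl0 : 0 ≤ l) (hl : (l • B - A).PosSemidef) :
    1 ≤ Real.sqrt l * Fq hA.1 hB.1 (1/2) (1/2) := by
  set P := matPow A (1/2) with hP
  set Q := matPow B (1/2) with hQ
  have h2' : ((Real.sqrt l) • Q - P).PosSemidef := by
    have h := sqrt_mono hA (psd_smul hB hl0) hl
    rwa [smul_matPow_half hB hl0] at h
  have h3 : 0 ≤ (P * ((Real.sqrt l) • Q - P)).trace :=
    trace_mul_psd_nonneg (matPow_posSemidef hA _) h2'
  have e : P * ((Real.sqrt l) • Q - P) = (Real.sqrt l) • (P * Q) - A := by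
    rw [mul_sub, mul_smul_comm, hP, matPow_half_mul hA]
  rw [e, trace_sub, trace_smul, tA] at h3
  have etr : (P * Q).trace = ((Fq hA.1 hB.1 (1/2) (1/2) : ℝ) : ℂ) := by
    rw [trace_rep hA.1 hB.1, Fq]
  rw [etr, Complex.real_smul, ← Complex.ofReal_mul] at h3
  have h4 : ((0 : ℝ) : ℂ) ≤ ((Real.sqrt l * Fq hA.1 hB.1 (1/2) (1/2) - 1 : ℝ) : ℂ) := by
    push_cast
    simpa using h3
  have := Complex.real_le_real.mp h4
  linarith

lemma key_bound {A B : Matrix n n ℂ} (hA : A.PosSemidef) (hB : B.PosSemidef)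
    (tA : A.trace = 1) (tB : B.trace = 1) {l m : ℝ}
    (hl : (l • B - A).PosSemidef) (hm : (m • A - B).PosSemidef)
    (hl1 : 1 ≤ l) (hm1 : 1 ≤ m) {s : ℝ} (hs0 : 0 ≤ s) (hs1 : s ≤ 1) :
    (Real.sqrt (l * m))⁻¹ ≤ ((matPow A s * matPow B (1 - s)).trace).re := by
  have hre : ((matPow A s * matPow B (1 - s)).trace).re = Fq hA.1 hB.1 s (1 - s) := by
    rw [trace_rep hA.1 hB.1, Fq, Complex.ofReal_re]
  rw [hre]
  have hsl : 0 < Real.sqrt l := Real.sqrt_pos.mpr (by linarith)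
  have hsm : 0 < Real.sqrt m := Real.sqrt_pos.mpr (by linarith)
  have h1 := Fq_half_ge hA hB tB (by linarith) hm
  have h2 := Fq_half_ge' hA hB tA (by linarith) hl
  have hFl : (Real.sqrt l)⁻¹ ≤ Fq hA.1 hB.1 (1/2) (1/2) := by
    rw [← one_div, div_le_iff₀ hsl]
    rw [mul_comm] at h2
    linarith
  have hFm : (Real.sqrt m)⁻¹ ≤ Fq hA.1 hB.1 (1/2) (1/2) := by
    rw [← one_div, div_le_iff₀ hsm]
    rw [mul_comm] at h1
    linarith
  have hmul : (Real.sqrt l)⁻¹ * (Real.sqrt m)⁻¹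
      ≤ Fq hA.1 hB.1 (1/2) (1/2) * Fq hA.1 hB.1 (1/2) (1/2) :=
    mul_le_mul hFl hFm (by positivity) (Fq_nonneg hA hB _ _)
  have hone : Fq hA.1 hB.1 (1 - s) s ≤ 1 := by
    have h := Fq_le_one hA hB tA tB (t := 1 - s) (by linarith) (by linarith)
    rwa [show (1:ℝ) - (1 - s) = s from by ring] at h
  have hchain : Fq hA.1 hB.1 s (1 - s) * Fq hA.1 hB.1 (1 - s) s
      ≤ Fq hA.1 hB.1 s (1 - s) := by
    calc Fq hA.1 hB.1 s (1 - s) * Fq hA.1 hB.1 (1 - s) s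
        ≤ Fq hA.1 hB.1 s (1 - s) * 1 :=
          mul_le_mul_of_nonneg_left hone (Fq_nonneg hA hB _ _)
      _ = _ := mul_one _
  rw [Real.sqrt_mul (by linarith : (0:ℝ) ≤ l), mul_inv]
  calc (Real.sqrt l)⁻¹ * (Real.sqrt m)⁻¹
      ≤ Fq hA.1 hB.1 (1/2) (1/2) * Fq hA.1 hB.1 (1/2) (1/2) := hmul
    _ ≤ Fq hA.1 hB.1 s (1 - s) * Fq hA.1 hB.1 (1 - s) s := Fq_CS hA hB s
    _ ≤ Fq hA.1 hB.1 s (1 - s) := hchain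
/-- **Chernoff bound vs. Hilbert distance.** -/
theorem chernoff_bound_vs_hilbert_distance
    {d : ℕ} (ρ₁ ρ₂ : Matrix (Fin d) (Fin d) ℂ)
    (h₁ : ρ₁.PosSemidef) (h₂ : ρ₂.PosSemidef)
    (t₁ : ρ₁.trace = 1) (t₂ : ρ₂.trace = 1)
    (ξ : ℝ)
    (hξ : ξ = - Real.log (sInf {x : ℝ | ∃ s ∈ Set.Icc (0 : ℝ) 1,
      x = ((matPow ρ₁ s * matPow ρ₂ (1 - s)).trace).re})) :
    ((ξ : ℝ) : EReal) ≤ mHilbert ρ₁ ρ₂ / 2 := by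
  by_cases htop : msupRatio ρ₁ ρ₂ = ⊤ ∨ msupRatio ρ₂ ρ₁ = ⊤
  · rw [mHilbert, if_pos htop]
    have h2 : (⊤ : EReal) / 2 = ⊤ := by
      apply EReal.top_div_of_pos_ne_top
      · exact_mod_cast (by norm_num : ((0:ℝ) : EReal) < ((2:ℝ) : EReal))
      · exact_mod_cast EReal.coe_ne_top 2
    rw [h2]
    exact le_top
  · push_neg at htop
    obtain ⟨hnt1, hnt2⟩ := htop
    obtain ⟨l, hl1, hlpsd, hleq⟩ := msup_spec h₁ h₂ t₁ t₂ hnt1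
    obtain ⟨m, hm1, hmpsd, hmeq⟩ := msup_spec h₂ h₁ t₂ t₁ hnt2
    rw [mHilbert, if_neg (by push_neg; exact ⟨hnt1, hnt2⟩), hleq, hmeq,
      EReal.toReal_coe, EReal.toReal_coe]
    have hcast : ((Real.log (l * m) : ℝ) : EReal) / 2 = ((Real.log (l * m) / 2 : ℝ) : EReal) := by
      rw [show (2:EReal) = ((2:ℝ) : EReal) from by norm_cast, ← EReal.coe_div]
    rw [hcast]
    rw [EReal.coe_le_coe_iff]
    -- now a real inequality
    have hlm : (1:ℝ) ≤ l * m := by nlinarith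
    have hsp : 0 < Real.sqrt (l * m) := Real.sqrt_pos.mpr (by linarith)
    have hpos : 0 < (Real.sqrt (l * m))⁻¹ := by positivity
    set T := {x : ℝ | ∃ s ∈ Set.Icc (0 : ℝ) 1,
      x = ((matPow ρ₁ s * matPow ρ₂ (1 - s)).trace).re} with hT
    have hTne : T.Nonempty :=
      ⟨((matPow ρ₁ 0 * matPow ρ₂ (1 - 0)).trace).re, 0, ⟨le_refl 0, zero_le_one⟩, rfl⟩
    have hlow : ∀ x ∈ T, (Real.sqrt (l * m))⁻¹ ≤ x := by
      rintro x ⟨s, ⟨hs0, hs1⟩, rfl⟩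
      exact key_bound h₁ h₂ t₁ t₂ hlpsd hmpsd hl1 hm1 hs0 hs1
    have hinf : (Real.sqrt (l * m))⁻¹ ≤ sInf T := le_csInf hTne hlow
    rw [hξ]
    calc - Real.log (sInf T) ≤ - Real.log ((Real.sqrt (l * m))⁻¹) := by
          apply neg_le_neg
          exact Real.log_le_log hpos hinf
      _ = Real.log (Real.sqrt (l * m)) := by rw [Real.log_inv, neg_neg]
      _ = Real.log (l * m) / 2 := Real.log_sqrt (by linarith)

end
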